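/- Let ζ_{i₁},…,ζ_{i_{n-1}}, ζ_j, ζ_k be distinct complex numbers with positive imaginary parts and u's unit vectors in ℂ^m; set d_{pq} = (i/(ζ_q-ζ_p*))⟨u_p,u_q⟩ and assume all relevant leading minors are nonzero. Define φ_{{S},p} by e^{-2φ_{{S},p}} = ∏_{s∈S}|(ζ_s-ζ_p)/(ζ_s-ζ_p*)|² · det[d on S∪{p}] / (d_{pp}·det[d on S]), for a finite index set S not containing p. Then the symmetry e^{-2(φ_{{i₁,…,i_{n-1},j},k} − φ_{{i₁,…,i_{n-1}},k})} = e^{-2(φ_{{i₁,…,i_{n-1},k},j} − φ_{{i₁,…,i_{n-1}},j})} holds, both sides being equal to |(ζ_j-ζ_k)/(ζ_j-ζ_k*)|² · det[d on {i₁,…,i_{n-1},j,k}]·det[d on {i₁,…,i_{n-1}}] / (det[d on {i₁,…,i_{n-1},j}]·det[d on {i₁,…,i_{n-1},k}]). -/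

import Mathlib

set_option maxHeartbeats 1000000


open Complex Matrix BigOperators

noncomputable section

/-- Hermitian inner product on ℂ^m, linear in the first slot. -/
def herm {m : ℕ} (u v : Fin m → ℂ) : ℂ := ∑ a, u a * (starRingEnd ℂ) (v a)


private lemma stmt18_aux (A c Jk J K S dkk : ℂ) (hA : A ≠ 0) (hd : dkk ≠ 0)
    (hJ : J ≠ 0) (hK : K ≠ 0) (hS : S ≠ 0) :
    (A * c * Jk / (dkk * J)) / (A * K / (dkk * S)) = c * Jk * S / (J * K) := by
  field_simp

theorem stmt18 {m n : ℕ} (ζ : Fin (n+2) → ℂ) (hinj : Function.Injective ζ)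
    (him : ∀ p, 0 < (ζ p).im)
    (u : Fin (n+2) → Fin m → ℂ) (hu : ∀ p, herm (u p) (u p) = 1) :
    -- indices: S = {i₁,…,iₙ} = {0,…,n-1}, j = n, k = n+1
    let jdx : Fin (n+2) := ⟨n, by omega⟩
    let kdx : Fin (n+2) := ⟨n+1, by omega⟩
    let e : Fin n → Fin (n+2) := Fin.castLE (by omega)
    let fj : Fin (n+1) → Fin (n+2) := Fin.snoc (Fin.castLE (by omega)) jdx
    let fk : Fin (n+1) → Fin (n+2) := Fin.snoc (Fin.castLE (by omega)) kdx
    let d : Matrix (Fin (n+2)) (Fin (n+2)) ℂ :=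
      fun p q => Complex.I / (ζ q - (starRingEnd ℂ) (ζ p)) * herm (u p) (u q)
    let DS : ℂ := (d.submatrix e e).det
    let DSj : ℂ := (d.submatrix fj fj).det
    let DSk : ℂ := (d.submatrix fk fk).det
    let DSjk : ℂ := d.det
    DS ≠ 0 → DSj ≠ 0 → DSk ≠ 0 →
    -- e^{-2φ_{{S},p}} = ∏_{s∈S}|(ζ_s-ζ_p)/(ζ_s-ζ_p*)|² · det[d on S∪{p}]/(d_pp·det[d on S])
    let X1 : ℂ :=
      (((∏ s : Fin (n+1), (norm ((ζ (fj s) - ζ kdx) /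
          (ζ (fj s) - (starRingEnd ℂ) (ζ kdx))))^2 : ℝ) : ℂ) *
        DSjk / (d kdx kdx * DSj)) /
      ((((∏ s : Fin n, (norm ((ζ (e s) - ζ kdx) /
          (ζ (e s) - (starRingEnd ℂ) (ζ kdx))))^2 : ℝ) : ℂ)) *
        DSk / (d kdx kdx * DS))
    let X2 : ℂ :=
      (((∏ s : Fin (n+1), (norm ((ζ (fk s) - ζ jdx) /
          (ζ (fk s) - (starRingEnd ℂ) (ζ jdx))))^2 : ℝ) : ℂ) *
        DSjk / (d jdx jdx * DSk)) /
      ((((∏ s : Fin n, (norm ((ζ (e s) - ζ jdx) /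
          (ζ (e s) - (starRingEnd ℂ) (ζ jdx))))^2 : ℝ) : ℂ)) *
        DSj / (d jdx jdx * DS))
    X1 = X2 ∧
      X1 = (((norm ((ζ jdx - ζ kdx) / (ζ jdx - (starRingEnd ℂ) (ζ kdx))))^2 : ℝ) : ℂ) *
        DSjk * DS / (DSj * DSk) := by
  intro jdx kdx e fj fk d DS DSj DSk DSjk hDS hDSj hDSk X1 X2
  -- basic nonvanishing facts
  have hzc : ∀ p q : Fin (n+2), ζ p - (starRingEnd ℂ) (ζ q) ≠ 0 := by
    intro p q h
    have h2 := congrArg Complex.im h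
    simp only [Complex.sub_im, Complex.conj_im, Complex.zero_im] at h2
    have := him p; have := him q; linarith
  have hne : ∀ p q : Fin (n+2), p ≠ q → ζ p - ζ q ≠ 0 := by
    intro p q h
    exact sub_ne_zero.mpr (fun hh => h (hinj hh))
  have hjk : jdx ≠ kdx := by
    intro h; exact absurd (congrArg Fin.val h) (by simp [jdx, kdx])
  have hek : ∀ s : Fin n, e s ≠ kdx := by
    intro s h
    have := congrArg Fin.val h
    simp only [e, Fin.coe_castLE, kdx] at this
    omega
  have hej : ∀ s : Fin n, e s ≠ jdx := by
    intro s h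
    have := congrArg Fin.val h
    simp only [e, Fin.coe_castLE, jdx] at this
    omega
  have habs : ∀ p q : Fin (n+2), p ≠ q →
      (norm ((ζ p - ζ q) / (ζ p - (starRingEnd ℂ) (ζ q))))^2 ≠ 0 := by
    intro p q h
    exact pow_ne_zero _ (norm_ne_zero_iff.mpr (div_ne_zero (hne p q h) (hzc p q)))
  have hdpp : ∀ p : Fin (n+2), d p p ≠ 0 := by
    intro p
    have hd : d p p = Complex.I / (ζ p - (starRingEnd ℂ) (ζ p)) * herm (u p) (u p) := rfl
    rw [hd, hu]
    simpa using div_ne_zero Complex.I_ne_zero (hzc p p)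
  have hAk : (∏ s : Fin n, (norm ((ζ (e s) - ζ kdx) /
      (ζ (e s) - (starRingEnd ℂ) (ζ kdx))))^2) ≠ 0 :=
    Finset.prod_ne_zero_iff.mpr (fun s _ => habs _ _ (hek s))
  have hAj : (∏ s : Fin n, (norm ((ζ (e s) - ζ jdx) /
      (ζ (e s) - (starRingEnd ℂ) (ζ jdx))))^2) ≠ 0 :=
    Finset.prod_ne_zero_iff.mpr (fun s _ => habs _ _ (hej s))
  -- split off the last factor of the (n+1)-products
  have hprodk : (∏ s : Fin (n+1), (norm ((ζ (fj s) - ζ kdx) /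
      (ζ (fj s) - (starRingEnd ℂ) (ζ kdx))))^2)
      = (∏ s : Fin n, (norm ((ζ (e s) - ζ kdx) /
      (ζ (e s) - (starRingEnd ℂ) (ζ kdx))))^2) *
        (norm ((ζ jdx - ζ kdx) / (ζ jdx - (starRingEnd ℂ) (ζ kdx))))^2 := by
    rw [Fin.prod_univ_castSucc]
    simp [fj, e]
  have hprodj : (∏ s : Fin (n+1), (norm ((ζ (fk s) - ζ jdx) /
      (ζ (fk s) - (starRingEnd ℂ) (ζ jdx))))^2)
      = (∏ s : Fin n, (norm ((ζ (e s) - ζ jdx) /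
      (ζ (e s) - (starRingEnd ℂ) (ζ jdx))))^2) *
        (norm ((ζ kdx - ζ jdx) / (ζ kdx - (starRingEnd ℂ) (ζ jdx))))^2 := by
    rw [Fin.prod_univ_castSucc]
    simp [fk, e]
  -- symmetry of the cross factor
  have habs_symm : norm ((ζ jdx - ζ kdx) / (ζ jdx - (starRingEnd ℂ) (ζ kdx)))
      = norm ((ζ kdx - ζ jdx) / (ζ kdx - (starRingEnd ℂ) (ζ jdx))) := by
    rw [norm_div, norm_div, ← Complex.norm_conj (ζ jdx - (starRingEnd ℂ) (ζ kdx))]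
    have h1 : norm (ζ jdx - ζ kdx) = norm (ζ kdx - ζ jdx) := by
      rw [norm_sub_rev]
    have h2 : (starRingEnd ℂ) (ζ jdx - (starRingEnd ℂ) (ζ kdx))
        = -(ζ kdx - (starRingEnd ℂ) (ζ jdx)) := by
      rw [map_sub, RingHomCompTriple.comp_apply, RingHom.id_apply]; ring
    rw [h1, h2, norm_neg]
  have hX1 : X1 = (((norm ((ζ jdx - ζ kdx) /
      (ζ jdx - (starRingEnd ℂ) (ζ kdx))))^2 : ℝ) : ℂ) * DSjk * DS / (DSj * DSk) := by
    show ((((∏ s : Fin (n+1), (norm ((ζ (fj s) - ζ kdx) /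
          (ζ (fj s) - (starRingEnd ℂ) (ζ kdx))))^2 : ℝ) : ℂ) *
        DSjk / (d kdx kdx * DSj)) /
      ((((∏ s : Fin n, (norm ((ζ (e s) - ζ kdx) /
          (ζ (e s) - (starRingEnd ℂ) (ζ kdx))))^2 : ℝ) : ℂ)) *
        DSk / (d kdx kdx * DS))) = _
    rw [hprodk]
    rw [Complex.ofReal_mul]
    exact stmt18_aux _ _ _ _ _ _ _ (Complex.ofReal_ne_zero.mpr hAk) (hdpp kdx) hDSj hDSk hDS
  have hX2 : X2 = (((norm ((ζ kdx - ζ jdx) /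
      (ζ kdx - (starRingEnd ℂ) (ζ jdx))))^2 : ℝ) : ℂ) * DSjk * DS / (DSj * DSk) := by
    show ((((∏ s : Fin (n+1), (norm ((ζ (fk s) - ζ jdx) /
          (ζ (fk s) - (starRingEnd ℂ) (ζ jdx))))^2 : ℝ) : ℂ) *
        DSjk / (d jdx jdx * DSk)) /
      ((((∏ s : Fin n, (norm ((ζ (e s) - ζ jdx) /
          (ζ (e s) - (starRingEnd ℂ) (ζ jdx))))^2 : ℝ) : ℂ)) *
        DSj / (d jdx jdx * DS))) = _
    rw [hprodj]
    rw [Complex.ofReal_mul]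
    rw [mul_comm DSj DSk]
    exact stmt18_aux _ _ _ _ _ _ _ (Complex.ofReal_ne_zero.mpr hAj) (hdpp jdx) hDSk hDSj hDS
  refine ⟨?_, hX1⟩
  rw [hX1, hX2, habs_symm]
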